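/- Let n₁, n₂ be positive integers and d₁, d₂ integers, and let m be an integer such that gcd(n₁+n₂, d₁+d₂−m·n₁) = 1. Then α = m is not a critical value for the type (n₁,n₂,d₁,d₂); that is, there exist no integers n₁′, n₂′, d₁′, d₂′ with 0 ≤ n₁′ ≤ n₁, 0 ≤ n₂′ ≤ n₂, (n₁′,n₂′) ≠ (0,0), (n₁′,n₂′,d₁′,d₂′) ≠ (n₁,n₂,d₁,d₂), n₁′·n₂ ≠ n₁·n₂′, and (d₁′+d₂′)/(n₁′+n₂′) + m·n₂′/(n₁′+n₂′) = (d₁+d₂)/(n₁+n₂) + m·n₂/(n₁+n₂). -/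

import Mathlib

/-- A real number `α` is a critical value for the type `(n₁, n₂, d₁, d₂)` if there exist
integers `n₁', n₂', d₁', d₂'` with `0 ≤ n₁' ≤ n₁`, `0 ≤ n₂' ≤ n₂`, `(n₁', n₂') ≠ (0,0)`,
`(n₁', n₂', d₁', d₂') ≠ (n₁, n₂, d₁, d₂)`, `n₁' * n₂ ≠ n₁ * n₂'`, and
`(d₁' + d₂')/(n₁' + n₂') + α * n₂'/(n₁' + n₂') = (d₁ + d₂)/(n₁ + n₂) + α * n₂/(n₁ + n₂)`. -/
def IsCriticalValue (n₁ n₂ d₁ d₂ : ℤ) (α : ℝ) : Prop :=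
  ∃ n₁' n₂' d₁' d₂' : ℤ,
    0 ≤ n₁' ∧ n₁' ≤ n₁ ∧ 0 ≤ n₂' ∧ n₂' ≤ n₂ ∧
    (n₁', n₂') ≠ (0, 0) ∧
    (n₁', n₂', d₁', d₂') ≠ (n₁, n₂, d₁, d₂) ∧
    n₁' * n₂ ≠ n₁ * n₂' ∧
    ((d₁' : ℝ) + (d₂' : ℝ)) / ((n₁' : ℝ) + (n₂' : ℝ))
        + α * (n₂' : ℝ) / ((n₁' : ℝ) + (n₂' : ℝ))
      = ((d₁ : ℝ) + (d₂ : ℝ)) / ((n₁ : ℝ) + (n₂ : ℝ))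
        + α * (n₂ : ℝ) / ((n₁ : ℝ) + (n₂ : ℝ))

/-- If `gcd (n₁ + n₂) (d₁ + d₂ - m * n₁) = 1` then the integer `m` is not a critical value
for the type `(n₁, n₂, d₁, d₂)`. -/
theorem integer_not_critical_value
    (n₁ n₂ d₁ d₂ m : ℤ) (hn₁ : 0 < n₁) (hn₂ : 0 < n₂)
    (hgcd : Int.gcd (n₁ + n₂) (d₁ + d₂ - m * n₁) = 1) :
    ¬ IsCriticalValue n₁ n₂ d₁ d₂ (m : ℝ) := by
  rintro ⟨a, b, c, d, ha0, ha, hb0, hb, hab0, hne, hcross, heq⟩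
  have h0 : ¬ (a = 0 ∧ b = 0) := by simpa [Prod.ext_iff] using hab0
  have hN : (0:ℤ) < n₁ + n₂ := by omega
  have hN' : (0:ℤ) < a + b := by omega
  have hNr : ((n₁:ℝ) + n₂) ≠ 0 := by
    have : ((n₁ + n₂ : ℤ) : ℝ) ≠ 0 := Int.cast_ne_zero.mpr hN.ne'
    push_cast at this; exact this
  have hN'r : ((a:ℝ) + b) ≠ 0 := by
    have : ((a + b : ℤ) : ℝ) ≠ 0 := Int.cast_ne_zero.mpr hN'.ne'
    push_cast at this; exact this
  rw [← add_div, ← add_div, div_eq_div_iff hN'r hNr] at heq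
  have hZ : (c + d + m * b) * (n₁ + n₂) = (d₁ + d₂ + m * n₂) * (a + b) := by
    exact_mod_cast heq
  have hcop0 : IsCoprime (n₁ + n₂) (d₁ + d₂ - m * n₁) :=
    Int.isCoprime_iff_gcd_eq_one.mpr hgcd
  have hcop : IsCoprime (n₁ + n₂) (d₁ + d₂ + m * n₂) := by
    have := hcop0.add_mul_left_right m
    rwa [show d₁ + d₂ - m * n₁ + (n₁ + n₂) * m = d₁ + d₂ + m * n₂ by ring] at this
  have hdvd : (n₁ + n₂) ∣ (d₁ + d₂ + m * n₂) * (a + b) :=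
    ⟨c + d + m * b, by linear_combination -hZ⟩
  have hdvd' : (n₁ + n₂) ∣ (a + b) := hcop.dvd_of_dvd_mul_left hdvd
  have hle : n₁ + n₂ ≤ a + b := Int.le_of_dvd hN' hdvd'
  have : a = n₁ ∧ b = n₂ := by omega
  exact hcross (by rw [this.1, this.2])
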